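/- Let G be a finite simple identifiable graph of girth at least 5 containing an induced subgraph P isomorphic to P11 (with x denoting the unique vertex of P of degree 2 in P, i.e. the subdivision vertex), such that every vertex of P other than x has all of its G-neighbours inside P. If C is an identifying code of G with |C ∩ V(P)| = 4, then x is dominated only by vertices outside V(P); that is, no vertex of N[x] ∩ C lies in V(P). -/

import Mathlib

/-- A graph is *identifiable* if no two distinct vertices have the same closed
neighbourhood. -/
def SimpleGraph.Identifiable {V : Type*} (G : SimpleGraph V) : Prop :=
  ∀ u v : V, insert u (G.neighborSet u) = insert v (G.neighborSet v) → u = v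

/-- A set of vertices is *dominating* if every vertex is equal or adjacent to a
member of the set. -/
def SimpleGraph.DominatingSet {V : Type*} (G : SimpleGraph V) (D : Set V) : Prop :=
  ∀ v : V, ∃ d ∈ D, d = v ∨ G.Adj d v

/-- A set `C` is an *identifying code* if it is dominating and every two distinct
vertices have different closed neighbourhoods within `C`. -/
def SimpleGraph.IdentifyingCode {V : Type*} (G : SimpleGraph V) (C : Set V) : Prop :=
  G.DominatingSet C ∧
    ∀ u v : V, u ≠ v →
      insert u (G.neighborSet u) ∩ C ≠ insert v (G.neighborSet v) ∩ C

/-- The identifying code number: the minimum size of an identifying code. -/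
noncomputable def SimpleGraph.gammaID {V : Type*} (G : SimpleGraph V) : ℕ :=
  sInf {k : ℕ | ∃ C : Set V, G.IdentifyingCode C ∧ C.ncard = k}

/-- The graph `P11`: the Petersen graph (outer vertices `0,…,4`, inner vertices
`5,…,9`, spokes `i — i+5`) with the outer edge `{0,1}` subdivided once by the new
vertex `10`, which is the unique vertex of degree 2. -/
def P11 : SimpleGraph (Fin 11) :=
  SimpleGraph.fromRel (fun a b =>
    (a, b) ∈ ([(0, 10), (1, 10), (1, 2), (2, 3), (3, 4), (4, 0),
               (5, 7), (6, 8), (7, 9), (8, 5), (9, 6),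
               (0, 5), (1, 6), (2, 7), (3, 8), (4, 9)] : List (Fin 11 × Fin 11)))

instance : DecidableRel P11.Adj := fun a b =>
  decidable_of_iff _ (SimpleGraph.fromRel_adj _ a b).symm

/-- The closed neighbourhood trace of the vertex `i` of `P11` on a set `S`. -/
def Ptrace (i : Fin 11) (S : Finset (Fin 11)) : Finset (Fin 11) :=
  (insert i (Finset.univ.filter (fun j => P11.Adj i j))) ∩ S

private theorem list_length_eq_four {α : Type*} {l : List α} (h : l.length = 4) :
    ∃ a b c d, l = [a, b, c, d] :=
  match l, h with
  | [a, b, c, d], _ => ⟨a, b, c, d, rfl⟩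

set_option maxRecDepth 100000 in
set_option maxHeartbeats 4000000 in
private lemma core2 : ∀ a b c d : Fin 11, a < b → b < c → c < d →
    (∀ i : Fin 11, i ≠ 10 → (Ptrace i {a,b,c,d}).Nonempty) →
    (∀ i j : Fin 11, i ≠ 10 → j ≠ 10 → i ≠ j → Ptrace i {a,b,c,d} ≠ Ptrace j {a,b,c,d}) →
    ∀ s ∈ ({a,b,c,d} : Finset (Fin 11)), s ≠ 0 ∧ s ≠ 1 ∧ s ≠ 10 := by decide

/-- Lemma: if an identifiable graph of girth at least 5 contains an induced copy of
`P11` (with subdivision vertex `x`) whose vertices other than `x` have all their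
neighbours inside the copy, and `C` is an identifying code meeting the copy in
exactly 4 vertices, then `x` is dominated only by vertices outside the copy:
no vertex of `N[x] ∩ C` lies in the copy. -/
theorem identifyingCode_inter_P11_eq_four_x_dominated_outside
    {V : Type*} [Fintype V] (G : SimpleGraph V) (hid : G.Identifiable)
    (hg : 5 ≤ G.egirth)
    (P : Set V) (x : V) (hx : x ∈ P)
    (φ : G.induce P ≃g P11) (hφx : φ ⟨x, hx⟩ = (10 : Fin 11))
    (hclosed : ∀ v ∈ P, v ≠ x → ∀ w : V, G.Adj v w → w ∈ P)
    (C : Set V) (hC : G.IdentifyingCode C) (hcard : (C ∩ P).ncard = 4) :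
    ∀ v ∈ insert x (G.neighborSet x) ∩ C, v ∉ P := by
  classical
  have adj_iff : ∀ a b : ↥P, G.Adj ↑a ↑b ↔ P11.Adj (φ a) (φ b) := fun a b =>
    φ.map_adj_iff.symm
  set T : Finset (Fin 11) := Finset.univ.filter (fun j => ((φ.symm j : ↥P) : V) ∈ C) with hT
  have hmemT : ∀ j : Fin 11, j ∈ T ↔ ((φ.symm j : ↥P) : V) ∈ C := by
    intro j; simp [hT]
  -- cardinality of T
  have hT4 : T.card = 4 := by
    have h1 : (↑T : Set (Fin 11)) = (fun a : ↥P => φ a) '' (Subtype.val ⁻¹' C) := by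
      ext j
      rw [Finset.mem_coe, hmemT]
      constructor
      · intro h; exact ⟨φ.symm j, h, by simp⟩
      · rintro ⟨a, ha, rfl⟩; simpa using ha
    calc T.card = (↑T : Set (Fin 11)).ncard := (Set.ncard_coe_finset T).symm
      _ = (Subtype.val ⁻¹' C : Set ↥P).ncard := by
          rw [h1, Set.ncard_image_of_injective _ φ.injective]
      _ = (P ∩ C).ncard := by
          rw [← Subtype.image_preimage_coe, Set.ncard_image_of_injective _ Subtype.val_injective]
      _ = 4 := by rw [Set.inter_comm]; exact hcard
  -- trace correspondence
  have hTr : ∀ (u : ↥P) (j : Fin 11), j ∈ Ptrace (φ u) T ↔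
      ((φ.symm j : ↥P) : V) ∈ insert (↑u) (G.neighborSet ↑u) ∩ C := by
    intro u j
    have e1 : j = φ u ↔ ((φ.symm j : ↥P) : V) = ↑u := by
      constructor
      · rintro rfl; simp
      · intro h
        have h2 : φ.symm j = u := Subtype.coe_injective h
        calc j = φ (φ.symm j) := by simp
          _ = φ u := by rw [h2]
    have e2 : P11.Adj (φ u) j ↔ G.Adj ↑u ↑(φ.symm j) := by
      rw [adj_iff u (φ.symm j)]; simp
    simp only [Ptrace, Finset.mem_inter, Finset.mem_insert, Finset.mem_filter,
      Finset.mem_univ, true_and, hmemT, Set.mem_inter_iff, Set.mem_insert_iff,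
      SimpleGraph.mem_neighborSet]
    rw [e1, e2]
  have hne10 : ∀ i : Fin 11, i ≠ 10 → ((φ.symm i : ↥P) : V) ≠ x := by
    intro i hi h
    apply hi
    have h2 : φ.symm i = ⟨x, hx⟩ := Subtype.coe_injective h
    have : φ (φ.symm i) = φ ⟨x, hx⟩ := by rw [h2]
    simpa [hφx] using this
  -- domination hypothesis for the core lemma
  have hdom : ∀ i : Fin 11, i ≠ 10 → (Ptrace i T).Nonempty := by
    intro i hi
    obtain ⟨d, hdC, hd⟩ := hC.1 ↑(φ.symm i)
    have hdP : d ∈ P := by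
      rcases hd with rfl | hadj
      · exact (φ.symm i).2
      · exact hclosed _ (φ.symm i).2 (hne10 i hi) d hadj.symm
    refine ⟨φ ⟨d, hdP⟩, ?_⟩
    have hi' : φ (φ.symm i) = i := by simp
    rw [← hi', hTr]
    refine Set.mem_inter ?_ (by simpa using hdC)
    simp only [RelIso.symm_apply_apply]
    rcases hd with rfl | hadj
    · exact Set.mem_insert _ _
    · exact Set.mem_insert_of_mem _ hadj.symm
  -- separation
  have step : ∀ (a b : ↥P), (↑a : V) ≠ x → Ptrace (φ a) T = Ptrace (φ b) T →
      insert (↑a : V) (G.neighborSet ↑a) ∩ C ⊆ insert (↑b : V) (G.neighborSet ↑b) ∩ C := by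
    intro a b hax heq z hz
    have hzP : z ∈ P := by
      rcases Set.mem_insert_iff.mp hz.1 with rfl | hadj
      · exact a.2
      · exact hclosed ↑a a.2 hax z hadj
    have h1 : φ ⟨z, hzP⟩ ∈ Ptrace (φ a) T := by rw [hTr]; simpa using hz
    rw [heq, hTr] at h1
    simpa using h1
  have hsep : ∀ i j : Fin 11, i ≠ 10 → j ≠ 10 → i ≠ j → Ptrace i T ≠ Ptrace j T := by
    intro i j hi hj hij heq
    have huw : ((φ.symm i : ↥P) : V) ≠ ↑(φ.symm j) := by
      intro h
      exact hij (by simpa using congrArg φ (Subtype.coe_injective h))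
    have heq' : Ptrace (φ (φ.symm i)) T = Ptrace (φ (φ.symm j)) T := by simpa using heq
    exact hC.2 _ _ huw (Set.Subset.antisymm
      (step _ _ (hne10 i hi) heq') (step _ _ (hne10 j hj) heq'.symm))
  -- decompose T into four sorted elements
  obtain ⟨a, b, c, d, he⟩ : ∃ a b c d : Fin 11, T.sort (· ≤ ·) = [a, b, c, d] :=
    list_length_eq_four (by rw [Finset.length_sort, hT4])
  have hst : (T.sort (· ≤ ·)).Pairwise (· < ·) := T.sortedLT_sort.pairwise
  rw [he] at hst
  simp only [List.pairwise_cons, List.mem_cons, List.mem_singleton, List.not_mem_nil] at hst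
  have hTeq : T = {a, b, c, d} := by
    rw [← Finset.sort_toFinset T (· ≤ ·), he]
    simp
  have hforb : ∀ s ∈ T, s ≠ 0 ∧ s ≠ 1 ∧ s ≠ 10 := by
    rw [hTeq]
    exact core2 a b c d (hst.1 b (Or.inl rfl)) (hst.2.1 c (Or.inl rfl))
      (hst.2.2.1 d (Or.inl rfl))
      (by rw [← hTeq]; exact hdom) (by rw [← hTeq]; exact hsep)
  -- conclusion
  intro v hv hvP
  have hmem : φ ⟨v, hvP⟩ ∈ T := by rw [hmemT]; simpa using hv.2
  obtain ⟨h0, h1, h10⟩ := hforb _ hmem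
  rcases Set.mem_insert_iff.mp hv.1 with rfl | hadj
  · exact h10 hφx
  · have hadj' : P11.Adj 10 (φ ⟨v, hvP⟩) := by
      rw [← hφx]
      exact (adj_iff ⟨x, hx⟩ ⟨v, hvP⟩).mp hadj
    have h01 : ∀ k : Fin 11, P11.Adj 10 k → k = 0 ∨ k = 1 := by decide
    rcases h01 _ hadj' with h | h
    · exact h0 h
    · exact h1 h
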